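/- arXiv:1710.06053 — 2 statements merged into one kernel-verified Lean document; each statement's English description precedes it below -/
import Mathlib

section
/- Assume g ≥ 1. The sequence 0 → A →∂₂ V ⊗[ℚ] A →∂₁ A →ε ℚ → 0 is exact: ∂₂ is injective, range ∂₂ = ker ∂₁, range ∂₁ = ker ε, and ε is surjective. Hence this sequence is a free left-module resolution of the trivial A-module ℚ. -/
/-!
Context: `V g` is the ℚ-vector space with basis `a₁,…,a_g, b₁,…,b_g`;
`θ g := Σ_j (a_j·b_j − b_j·a_j)` in the tensor algebra `T(V g)`;
`A g` is the quotient of `T(V g)` by the two-sided ideal generated by `θ g`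
(realized as `RingQuot` of the relation identifying `θ g` with `0`), with quotient
map `piA g` and `iotaA g : V g →ₗ[ℚ] A g` the composite of the canonical map with `piA g`.
-/

open scoped TensorProduct

noncomputable section

/-- The ℚ-vector space with basis indexed by `Fin g ⊕ Fin g`. -/
abbrev V (g : ℕ) : Type := (Fin g ⊕ Fin g) → ℚ

/-- The basis vector `a_j`. -/
def aV (g : ℕ) (j : Fin g) : V g := Pi.single (Sum.inl j) 1

/-- The basis vector `b_j`. -/
def bV (g : ℕ) (j : Fin g) : V g := Pi.single (Sum.inr j) 1

/-- The element `θ = Σ_j (a_j b_j − b_j a_j)` of the tensor algebra `T(V)`. -/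
def theta (g : ℕ) : TensorAlgebra ℚ (V g) :=
  ∑ j : Fin g,
    (TensorAlgebra.ι ℚ (aV g j) * TensorAlgebra.ι ℚ (bV g j)
      - TensorAlgebra.ι ℚ (bV g j) * TensorAlgebra.ι ℚ (aV g j))

/-- The relation identifying `θ` with `0`; quotienting by it is quotienting by the
two-sided ideal generated by `θ`. -/
def Arel (g : ℕ) : TensorAlgebra ℚ (V g) → TensorAlgebra ℚ (V g) → Prop :=
  fun x y => x = theta g ∧ y = 0

/-- `A := T(V)/(θ)`. -/
abbrev A (g : ℕ) : Type := RingQuot (Arel g)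

/-- The quotient map `π : T(V) → A`. -/
def piA (g : ℕ) : TensorAlgebra ℚ (V g) →ₐ[ℚ] A g := RingQuot.mkAlgHom ℚ (Arel g)

/-- `ι : V → A`, the composite of the canonical linear map `V → T(V)` with `π`. -/
def iotaA (g : ℕ) : V g →ₗ[ℚ] A g :=
  (piA g).toLinearMap ∘ₗ TensorAlgebra.ι ℚ

/-- The augmentation `ε : A → ℚ`, the ℚ-algebra homomorphism induced by the algebra map
`T(V) → ℚ` killing `V` (well defined since `θ` lies in its kernel). -/
def epsA (g : ℕ) : A g →ₐ[ℚ] ℚ :=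
  RingQuot.liftAlgHom ℚ
    ⟨TensorAlgebra.lift ℚ (0 : V g →ₗ[ℚ] ℚ), by
      rintro x y ⟨rfl, rfl⟩
      simp [theta]⟩

section AuxNF

/-! Auxiliary -/

abbrev X (g : ℕ) := Fin g ⊕ Fin g
abbrev W (g : ℕ) : Type := List (X g) →₀ ℚ

variable (g : ℕ)

def eb (x : X g) : V g := Pi.single x 1

@[simp] lemma eb_inl (j : Fin g) : eb g (Sum.inl j) = aV g j := rfl
@[simp] lemma eb_inr (j : Fin g) : eb g (Sum.inr j) = bV g j := rfl

def cns (x : X g) : W g →ₗ[ℚ] W g := Finsupp.lmapDomain ℚ ℚ (List.cons x)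

@[simp] lemma cns_single (x : X g) (l : List (X g)) (c : ℚ) :
    cns g x (Finsupp.single l c) = Finsupp.single (x :: l) c := by
  simp [cns, Finsupp.mapDomain_single]

variable [NeZero g]

def Lb : List (X g) → Fin g → W g
  | Sum.inl i :: l', j =>
    if i = 0 ∧ j = 0 then
      (∑ k : Fin g, cns g (Sum.inl k) (Lb l' k)) -
        ∑ k ∈ Finset.univ.erase (0 : Fin g),
          Finsupp.single (Sum.inr k :: Sum.inl k :: l') 1
    else Finsupp.single (Sum.inr j :: Sum.inl i :: l') 1
  | l, j => Finsupp.single (Sum.inr j :: l) 1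

lemma Lb_nil (j : Fin g) : Lb g [] j = Finsupp.single [Sum.inr j] 1 := rfl

lemma Lb_cons_inr (i : Fin g) (l : List (X g)) (j : Fin g) :
    Lb g (Sum.inr i :: l) j = Finsupp.single (Sum.inr j :: Sum.inr i :: l) 1 := rfl

lemma Lb_cons_inl (i : Fin g) (l : List (X g)) (j : Fin g) :
    Lb g (Sum.inl i :: l) j =
      if i = 0 ∧ j = 0 then
        (∑ k : Fin g, cns g (Sum.inl k) (Lb g l k)) -
          ∑ k ∈ Finset.univ.erase (0 : Fin g),
            Finsupp.single (Sum.inr k :: Sum.inl k :: l) 1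
      else Finsupp.single (Sum.inr j :: Sum.inl i :: l) 1 := rfl

def Lop : X g → W g →ₗ[ℚ] W g
  | Sum.inl j => cns g (Sum.inl j)
  | Sum.inr j => Finsupp.linearCombination ℚ (fun l => Lb g l j)

@[simp] lemma Lop_inl (j : Fin g) (w : W g) : Lop g (Sum.inl j) w = cns g (Sum.inl j) w := rfl

@[simp] lemma Lop_inr_single (j : Fin g) (l : List (X g)) :
    Lop g (Sum.inr j) (Finsupp.single l 1) = Lb g l j := by
  simp [Lop, Finsupp.linearCombination_single]

lemma Lrel (l : List (X g)) :
    ∑ j : Fin g, (Lop g (Sum.inl j) (Lop g (Sum.inr j) (Finsupp.single l 1))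
      - Lop g (Sum.inr j) (Lop g (Sum.inl j) (Finsupp.single l 1))) = 0 := by
  have h1 : ∀ j : Fin g, Lop g (Sum.inr j) (cns g (Sum.inl j) (Finsupp.single l 1))
      = Lb g (Sum.inl j :: l) j := by
    intro j; rw [cns_single, Lop_inr_single]
  simp only [Lop_inl, h1, Lop_inr_single, Finset.sum_sub_distrib]
  have h2 : ∑ j : Fin g, Lb g (Sum.inl j :: l) j
      = (∑ k : Fin g, cns g (Sum.inl k) (Lb g l k)) := by
    rw [← Finset.add_sum_erase Finset.univ _ (Finset.mem_univ (0 : Fin g))]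
    rw [Lb_cons_inl, if_pos ⟨rfl, rfl⟩]
    have h3 : ∀ j ∈ Finset.univ.erase (0 : Fin g),
        Lb g (Sum.inl j :: l) j = Finsupp.single (Sum.inr j :: Sum.inl j :: l) 1 := by
      intro j hj
      rw [Lb_cons_inl, if_neg]
      rintro ⟨rfl, h⟩
      exact (Finset.mem_erase.mp hj).1 h
    rw [Finset.sum_congr rfl h3]
    abel
  rw [h2]
  simp

/-! The representation of `A` on `W`. -/

def Lmap : V g →ₗ[ℚ] Module.End ℚ (W g) :=
  (Pi.basisFun ℚ (X g)).constr ℚ (fun x => Lop g x)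

lemma Lmap_basis (x : X g) : Lmap g (eb g x) = Lop g x := by
  have : eb g x = Pi.basisFun ℚ (X g) x := by simp [eb]
  rw [this, Lmap, Module.Basis.constr_basis]

lemma Lmap_apply (v : V g) : Lmap g v = ∑ x : X g, v x • Lop g x := by
  rw [Lmap, Module.Basis.constr_apply_fintype]
  congr 1

def rhoT : TensorAlgebra ℚ (V g) →ₐ[ℚ] Module.End ℚ (W g) :=
  TensorAlgebra.lift ℚ (Lmap g)

lemma rhoT_theta : rhoT g (theta g) = 0 := by
  rw [theta]
  simp only [map_sum, map_sub, map_mul, rhoT, TensorAlgebra.lift_ι_apply]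
  simp only [← eb_inl, ← eb_inr, Lmap_basis]
  refine Finsupp.lhom_ext (fun l c => ?_)
  simp only [LinearMap.sum_apply, LinearMap.sub_apply, Module.End.mul_apply,
    LinearMap.zero_apply]
  have hs : (Finsupp.single l c : W g) = c • Finsupp.single l 1 := by
    rw [Finsupp.smul_single, smul_eq_mul, mul_one]
  simp only [hs, map_smul, ← smul_sub, ← Finset.smul_sum, Lrel, smul_zero]

def rho : A g →ₐ[ℚ] Module.End ℚ (W g) :=
  RingQuot.liftAlgHom ℚ ⟨rhoT g, by
    rintro x y ⟨rfl, rfl⟩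
    simp [rhoT_theta]⟩

lemma rho_piA (t : TensorAlgebra ℚ (V g)) : rho g (piA g t) = rhoT g t := by
  rw [piA, rho, RingQuot.liftAlgHom_mkAlgHom_apply]

lemma rho_iota (v : V g) : rho g (iotaA g v) = Lmap g v := by
  have : iotaA g v = piA g (TensorAlgebra.ι ℚ v) := rfl
  rw [this, rho_piA, rhoT, TensorAlgebra.lift_ι_apply]

def Phi : A g →ₗ[ℚ] W g where
  toFun u := rho g u (Finsupp.single [] 1)
  map_add' u v := by simp [map_add]
  map_smul' c u := by simp [map_smul]

@[simp] lemma Phi_apply (u : A g) : Phi g u = rho g u (Finsupp.single [] 1) := rfl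

def Psi : W g →ₗ[ℚ] A g :=
  Finsupp.linearCombination ℚ (fun l => (l.map fun x => iotaA g (eb g x)).prod)

@[simp] lemma Psi_single (l : List (X g)) :
    Psi g (Finsupp.single l 1) = (l.map fun x => iotaA g (eb g x)).prod := by
  simp [Psi, Finsupp.linearCombination_single]

lemma Psi_nil : Psi g (Finsupp.single ([] : List (X g)) 1) = 1 := by simp

lemma Psi_cons (x : X g) (l : List (X g)) :
    Psi g (Finsupp.single (x :: l) 1) = iotaA g (eb g x) * Psi g (Finsupp.single l 1) := by
  simp

lemma psi_cns (x : X g) (w : W g) :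
    Psi g (cns g x w) = iotaA g (eb g x) * Psi g w := by
  induction w using Finsupp.induction_linear with
  | zero => simp
  | add f h hf hh => simp [map_add, hf, hh, mul_add]
  | single l c =>
      have hs : (Finsupp.single l c : W g) = c • Finsupp.single l 1 := by
        rw [Finsupp.smul_single, smul_eq_mul, mul_one]
      rw [hs, map_smul, map_smul, map_smul, Psi_single, cns_single]
      have : (Finsupp.single (x :: l) (1 : ℚ) : W g) = Finsupp.single (x :: l) 1 := rfl
      rw [show (Finsupp.single (x :: l) (1:ℚ) : W g) = Finsupp.single (x::l) 1 from rfl]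
      simp [Psi_cons, mul_smul_comm]

lemma theta_zero :
    ∑ j : Fin g, (iotaA g (aV g j) * iotaA g (bV g j)
      - iotaA g (bV g j) * iotaA g (aV g j)) = (0 : A g) := by
  have h : piA g (theta g) = piA g 0 :=
    RingQuot.mkAlgHom_rel ℚ ⟨rfl, rfl⟩
  rw [theta] at h
  simpa [map_sum, map_sub, map_mul, iotaA] using h

lemma psi_Lb (l : List (X g)) : ∀ j : Fin g,
    Psi g (Lb g l j) = iotaA g (bV g j) * Psi g (Finsupp.single l 1) := by
  induction l with
  | nil =>
      intro j
      rw [Lb_nil]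
      simpa using Psi_cons g (Sum.inr j) []
  | cons x l ih =>
      intro j
      cases x with
      | inr i =>
          rw [Lb_cons_inr]
          simpa using Psi_cons g (Sum.inr j) (Sum.inr i :: l)
      | inl i =>
          by_cases h : i = 0 ∧ j = 0
          · obtain ⟨rfl, rfl⟩ := h
            rw [Lb_cons_inl, if_pos ⟨rfl, rfl⟩]
            simp only [map_sub, map_sum]
            have h1 : ∀ k : Fin g, Psi g (cns g (Sum.inl k) (Lb g l k))
                = iotaA g (aV g k) * (iotaA g (bV g k) * Psi g (Finsupp.single l 1)) := by
              intro k; rw [psi_cns, ih k]; rfl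
            have h2 : ∀ k ∈ Finset.univ.erase (0 : Fin g),
                Psi g (Finsupp.single (Sum.inr k :: Sum.inl k :: l) 1)
                = iotaA g (bV g k) * (iotaA g (aV g k) * Psi g (Finsupp.single l 1)) := by
              intro k _
              rw [Psi_cons, Psi_cons]; rfl
            rw [Finset.sum_congr rfl fun k _ => h1 k, Finset.sum_congr rfl h2]
            have key := congrArg (· * Psi g (Finsupp.single l 1)) (theta_zero g)
            simp only [Finset.sum_mul, sub_mul, zero_mul, mul_assoc] at key
            -- key : ∑ k, (a_k * (b_k * Ψl) - b_k * (a_k * Ψl)) = 0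
            have expand : ∑ k : Fin g,
                iotaA g (bV g k) * (iotaA g (aV g k) * Psi g (Finsupp.single l 1))
                = iotaA g (bV g 0) * (iotaA g (aV g 0) * Psi g (Finsupp.single l 1))
                  + ∑ k ∈ Finset.univ.erase (0 : Fin g),
                    iotaA g (bV g k) * (iotaA g (aV g k) * Psi g (Finsupp.single l 1)) :=
              (Finset.add_sum_erase Finset.univ _ (Finset.mem_univ (0 : Fin g))).symm
            have goal2 : ∑ k : Fin g,
                iotaA g (aV g k) * (iotaA g (bV g k) * Psi g (Finsupp.single l 1))
                = ∑ k : Fin g,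
                  iotaA g (bV g k) * (iotaA g (aV g k) * Psi g (Finsupp.single l 1)) := by
              rw [← sub_eq_zero, ← Finset.sum_sub_distrib]
              exact key
            rw [goal2, expand, Psi_cons]
            simp only [eb_inr, eb_inl]
            abel
          · rw [Lb_cons_inl, if_neg h]
            simp only [Psi_cons, eb_inr, eb_inl, mul_assoc]

lemma psi_Lop (x : X g) (w : W g) :
    Psi g (Lop g x w) = iotaA g (eb g x) * Psi g w := by
  cases x with
  | inl j => rw [Lop_inl, psi_cns]
  | inr j =>
      induction w using Finsupp.induction_linear with
      | zero => simp
      | add f h hf hh => simp [map_add, hf, hh, mul_add]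
      | single l c =>
          have hs : (Finsupp.single l c : W g) = c • Finsupp.single l 1 := by
            rw [Finsupp.smul_single, smul_eq_mul, mul_one]
          rw [hs, map_smul, map_smul, map_smul, Lop_inr_single, psi_Lb]
          simp [mul_smul_comm, eb_inr]

lemma v_eq_sum (v : V g) : v = ∑ x : X g, v x • eb g x := by
  ext y
  rw [Finset.sum_apply]
  simp only [Pi.smul_apply, eb, Pi.single_apply, smul_eq_mul, mul_ite, mul_one, mul_zero]
  simp

lemma iota_eq_sum (v : V g) : iotaA g v = ∑ x : X g, v x • iotaA g (eb g x) := by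
  conv_lhs => rw [v_eq_sum g v]
  simp [map_sum, map_smul]

lemma psi_Lmap (v : V g) (w : W g) :
    Psi g (Lmap g v w) = iotaA g v * Psi g w := by
  rw [Lmap_apply]
  simp only [LinearMap.sum_apply, LinearMap.smul_apply, map_sum, map_smul, psi_Lop]
  rw [iota_eq_sum g v, Finset.sum_mul]
  simp [smul_mul_assoc]

lemma psi_rho (u : A g) (w : W g) : Psi g (rho g u w) = u * Psi g w := by
  obtain ⟨t, rfl⟩ := RingQuot.mkAlgHom_surjective ℚ (Arel g) u
  show Psi g (rho g (piA g t) w) = piA g t * Psi g w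
  induction t using TensorAlgebra.induction generalizing w with
  | algebraMap r =>
      rw [AlgHom.commutes, AlgHom.commutes, Algebra.algebraMap_eq_smul_one,
        Algebra.algebraMap_eq_smul_one, LinearMap.smul_apply, Module.End.one_apply,
        map_smul, smul_mul_assoc, one_mul]
  | ι v =>
      rw [rho_piA, rhoT, TensorAlgebra.lift_ι_apply, psi_Lmap]
      rfl
  | mul s t hs ht =>
      rw [map_mul, map_mul, Module.End.mul_apply, hs, ht, mul_assoc]
  | add s t hs ht =>
      rw [map_add, map_add, LinearMap.add_apply, map_add, hs, ht, add_mul]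

lemma psi_phi (u : A g) : Psi g (Phi g u) = u := by
  rw [Phi_apply, psi_rho, Psi_nil, mul_one]

lemma phi_iota_mul (v : V g) (u : A g) :
    Phi g (iotaA g v * u) = Lmap g v (Phi g u) := by
  rw [Phi_apply, Phi_apply, map_mul, Module.End.mul_apply, rho_iota]

/-! Reduced words. -/

def RedW : List (X g) → Prop :=
  List.Chain' (fun x y => ¬(x = Sum.inr (0 : Fin g) ∧ y = Sum.inl (0 : Fin g)))

lemma redW_nil : RedW g [] := List.isChain_nil

lemma redW_tail {x : X g} {l : List (X g)} (h : RedW g (x :: l)) : RedW g l :=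
  h.tail

lemma redW_cons_inl {l : List (X g)} (h : RedW g l) (j : Fin g) :
    RedW g (Sum.inl j :: l) := by
  rw [RedW, List.Chain', List.isChain_cons]
  exact ⟨fun y _ => by simp, h⟩

def Wred : Submodule ℚ (W g) :=
  Submodule.span ℚ {w | ∃ l, RedW g l ∧ w = Finsupp.single l 1}

lemma single_mem_Wred {l : List (X g)} (h : RedW g l) :
    Finsupp.single l 1 ∈ Wred g :=
  Submodule.subset_span ⟨l, h, rfl⟩

lemma cns_inl_mem_Wred (j : Fin g) {w : W g} (h : w ∈ Wred g) :
    cns g (Sum.inl j) w ∈ Wred g := by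
  induction h using Submodule.span_induction with
  | mem w hw =>
      obtain ⟨l, hl, rfl⟩ := hw
      rw [cns_single]
      exact single_mem_Wred g (redW_cons_inl g hl j)
  | zero => simp [(Wred g).zero_mem]
  | add u v _ _ hu hv => rw [map_add]; exact (Wred g).add_mem hu hv
  | smul c u _ hu => rw [map_smul]; exact (Wred g).smul_mem c hu

lemma redW_cons_inr {l : List (X g)} (h : RedW g l) {j : Fin g}
    (hj : ∀ l', l = Sum.inl (0 : Fin g) :: l' → j ≠ 0) :
    RedW g (Sum.inr j :: l) := by
  rw [RedW, List.Chain', List.isChain_cons]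
  refine ⟨?_, h⟩
  intro y hy
  rintro ⟨hx, rfl⟩
  cases l with
  | nil => simp at hy
  | cons z l' =>
      simp only [List.head?_cons, Option.mem_def, Option.some.injEq] at hy
      subst hy
      exact hj l' rfl (by simpa using hx)

lemma Lb_mem_Wred {l : List (X g)} (h : RedW g l) (j : Fin g) :
    Lb g l j ∈ Wred g := by
  induction l generalizing j with
  | nil =>
      rw [Lb_nil]
      exact single_mem_Wred g (redW_cons_inr g (redW_nil g) (by simp))
  | cons x l ih =>
      cases x with
      | inr i =>
          rw [Lb_cons_inr]
          refine single_mem_Wred g (redW_cons_inr g h ?_)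
          intro l' hl'
          simp at hl'
      | inl i =>
          by_cases hij : i = 0 ∧ j = 0
          · obtain ⟨rfl, rfl⟩ := hij
            rw [Lb_cons_inl, if_pos ⟨rfl, rfl⟩]
            refine (Wred g).sub_mem ((Wred g).sum_mem fun k _ => ?_)
              ((Wred g).sum_mem fun k hk => ?_)
            · exact cns_inl_mem_Wred g k (ih (redW_tail g h) k)
            · refine single_mem_Wred g (redW_cons_inr g
                (redW_cons_inl g (redW_tail g h) k) ?_)
              exact fun l' _ => (Finset.mem_erase.mp hk).1
          · rw [Lb_cons_inl, if_neg hij]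
            refine single_mem_Wred g (redW_cons_inr g h ?_)
            rintro l' hl' rfl
            obtain ⟨h1, -⟩ := List.cons_eq_cons.mp hl'
            exact hij ⟨by simpa using h1, rfl⟩

lemma Lop_mem_Wred (x : X g) {w : W g} (h : w ∈ Wred g) :
    Lop g x w ∈ Wred g := by
  cases x with
  | inl j => exact cns_inl_mem_Wred g j h
  | inr j =>
      induction h using Submodule.span_induction with
      | mem w hw =>
          obtain ⟨l, hl, rfl⟩ := hw
          rw [Lop_inr_single]
          exact Lb_mem_Wred g hl j
      | zero => simp [(Wred g).zero_mem]
      | add u v _ _ hu hv => rw [map_add]; exact (Wred g).add_mem hu hv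
      | smul c u _ hu => rw [map_smul]; exact (Wred g).smul_mem c hu

lemma Lmap_mem_Wred (v : V g) {w : W g} (h : w ∈ Wred g) :
    Lmap g v w ∈ Wred g := by
  rw [Lmap_apply]
  simp only [LinearMap.sum_apply, LinearMap.smul_apply]
  exact (Wred g).sum_mem fun x _ => (Wred g).smul_mem _ (Lop_mem_Wred g x h)

lemma rho_mem_Wred (u : A g) {w : W g} (h : w ∈ Wred g) :
    rho g u w ∈ Wred g := by
  obtain ⟨t, rfl⟩ := RingQuot.mkAlgHom_surjective ℚ (Arel g) u
  show rho g (piA g t) w ∈ Wred g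
  induction t using TensorAlgebra.induction generalizing w with
  | algebraMap r =>
      rw [AlgHom.commutes, AlgHom.commutes, Algebra.algebraMap_eq_smul_one,
        LinearMap.smul_apply, Module.End.one_apply]
      exact (Wred g).smul_mem r h
  | ι v =>
      rw [rho_piA, rhoT, TensorAlgebra.lift_ι_apply]
      exact Lmap_mem_Wred g v h
  | mul s t hs ht =>
      rw [map_mul, map_mul, Module.End.mul_apply]
      exact hs (ht h)
  | add s t hs ht =>
      rw [map_add, map_add, LinearMap.add_apply]
      exact (Wred g).add_mem (hs h) (ht h)

lemma phi_mem_Wred (u : A g) : Phi g u ∈ Wred g := by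
  rw [Phi_apply]
  exact rho_mem_Wred g u (single_mem_Wred g (redW_nil g))

lemma phi_psi_single {l : List (X g)} (h : RedW g l) :
    Phi g (Psi g (Finsupp.single l 1)) = Finsupp.single l 1 := by
  induction l with
  | nil =>
      rw [Psi_nil, Phi_apply, map_one, Module.End.one_apply]
  | cons x l ih =>
      rw [Psi_cons, phi_iota_mul, ih (redW_tail g h), Lmap_basis]
      cases x with
      | inl j => rw [Lop_inl, cns_single]
      | inr j =>
          rw [Lop_inr_single]
          cases l with
          | nil => rw [Lb_nil]
          | cons y l' =>
              cases y with
              | inr i => rw [Lb_cons_inr]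
              | inl i =>
                  rw [Lb_cons_inl, if_neg]
                  rintro ⟨rfl, rfl⟩
                  rw [RedW, List.Chain', List.isChain_cons_cons] at h
                  exact h.1 ⟨rfl, rfl⟩

lemma phi_psi {w : W g} (h : w ∈ Wred g) : Phi g (Psi g w) = w := by
  induction h using Submodule.span_induction with
  | mem w hw =>
      obtain ⟨l, hl, rfl⟩ := hw
      exact phi_psi_single g hl
  | zero => simp
  | add u v _ _ hu hv => rw [map_add, map_add, hu, hv]
  | smul c u _ hu => rw [map_smul, map_smul, hu]

/-! Homotopies. -/

def t0 : W g →ₗ[ℚ] V g ⊗[ℚ] A g :=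
  Finsupp.linearCombination ℚ fun l =>
    match l with
    | [] => (0 : V g ⊗[ℚ] A g)
    | x :: l' => eb g x ⊗ₜ[ℚ] Psi g (Finsupp.single l' 1)

@[simp] lemma t0_nil : t0 g (Finsupp.single ([] : List (X g)) 1) = 0 := by
  simp [t0, Finsupp.linearCombination_single]

@[simp] lemma t0_cons (x : X g) (l : List (X g)) :
    t0 g (Finsupp.single (x :: l) 1) = eb g x ⊗ₜ[ℚ] Psi g (Finsupp.single l 1) := by
  simp [t0, Finsupp.linearCombination_single]

lemma t0_cns (x : X g) (w : W g) :
    t0 g (cns g x w) = eb g x ⊗ₜ[ℚ] Psi g w := by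
  induction w using Finsupp.induction_linear with
  | zero => simp [TensorProduct.tmul_zero]
  | add f h hf hh => simp [map_add, hf, hh, TensorProduct.tmul_add]
  | single l c =>
      have hs : (Finsupp.single l c : W g) = c • Finsupp.single l 1 := by
        rw [Finsupp.smul_single, smul_eq_mul, mul_one]
      rw [hs, map_smul, map_smul, map_smul, cns_single, t0_cons,
        TensorProduct.tmul_smul]

def sgm : W g →ₗ[ℚ] A g :=
  Finsupp.linearCombination ℚ fun l =>
    match l with
    | Sum.inl i :: l' =>
        if i = 0 then -(Psi g (Finsupp.single l' 1)) else (0 : A g)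
    | _ => (0 : A g)

@[simp] lemma sgm_nil : sgm g (Finsupp.single ([] : List (X g)) 1) = 0 := by
  simp [sgm, Finsupp.linearCombination_single]

@[simp] lemma sgm_cons_inr (i : Fin g) (l : List (X g)) :
    sgm g (Finsupp.single (Sum.inr i :: l) 1) = 0 := by
  simp [sgm, Finsupp.linearCombination_single]

lemma sgm_cons_inl (i : Fin g) (l : List (X g)) :
    sgm g (Finsupp.single (Sum.inl i :: l) 1)
      = if i = 0 then -(Psi g (Finsupp.single l 1)) else 0 := by
  simp [sgm, Finsupp.linearCombination_single]

lemma sgm_cns_inl0 (w : W g) :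
    sgm g (cns g (Sum.inl (0 : Fin g)) w) = -(Psi g w) := by
  induction w using Finsupp.induction_linear with
  | zero => simp
  | add f h hf hh => simp [map_add, hf, hh]; abel
  | single l c =>
      have hs : (Finsupp.single l c : W g) = c • Finsupp.single l 1 := by
        rw [Finsupp.smul_single, smul_eq_mul, mul_one]
      rw [hs, map_smul, map_smul, map_smul, cns_single, sgm_cons_inl, if_pos rfl,
        smul_neg]

def s1m : V g ⊗[ℚ] A g →ₗ[ℚ] A g :=
  TensorProduct.lift ((Pi.basisFun ℚ (X g)).constr ℚ
    fun x => if x = Sum.inr (0 : Fin g) then (sgm g) ∘ₗ (Phi g) else 0)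

lemma s1m_tmul_basis (x : X g) (u : A g) :
    s1m g (eb g x ⊗ₜ[ℚ] u)
      = if x = Sum.inr (0 : Fin g) then sgm g (Phi g u) else 0 := by
  rw [s1m, TensorProduct.lift.tmul]
  have hx : eb g x = Pi.basisFun ℚ (X g) x := by simp [eb]
  rw [hx, Module.Basis.constr_basis]
  split
  · rfl
  · rfl

def s0m : A g →ₗ[ℚ] V g ⊗[ℚ] A g := (t0 g) ∘ₗ (Phi g)

/-! The ε-related lemmas. -/

lemma eps_iota (v : V g) : epsA g (iotaA g v) = 0 := by
  have : iotaA g v = piA g (TensorAlgebra.ι ℚ v) := rfl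
  rw [this, piA, epsA, RingQuot.liftAlgHom_mkAlgHom_apply]
  simp

lemma eps_psi_cons (x : X g) (l : List (X g)) :
    epsA g (Psi g (Finsupp.single (x :: l) 1)) = 0 := by
  rw [Psi_cons, map_mul, eps_iota, zero_mul]

section MainIdentities

variable (D2' : A g →ₗ[ℚ] V g ⊗[ℚ] A g) (D1' : V g ⊗[ℚ] A g →ₗ[ℚ] A g)

lemma h0_identity (hD1 : ∀ (x : V g) (v : A g), D1' (x ⊗ₜ[ℚ] v) = iotaA g x * v)
    (u : A g) : D1' (s0m g u) + epsA g u • 1 = u := by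
  have key : ∀ w : W g, D1' (t0 g w) + epsA g (Psi g w) • 1 = Psi g w := by
    intro w
    induction w using Finsupp.induction_linear with
    | zero => simp
    | add f h hf hh =>
        simp only [map_add, add_smul]
        calc D1' (t0 g f) + D1' (t0 g h)
              + ((epsA g) (Psi g f) • 1 + (epsA g) (Psi g h) • 1)
            = (D1' (t0 g f) + (epsA g) (Psi g f) • 1)
              + (D1' (t0 g h) + (epsA g) (Psi g h) • 1) := by abel
          _ = Psi g f + Psi g h := by rw [hf, hh]
    | single l c =>
        have base : D1' (t0 g (Finsupp.single l 1))
            + epsA g (Psi g (Finsupp.single l 1)) • 1 = Psi g (Finsupp.single l 1) := by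
          cases l with
          | nil => rw [t0_nil, map_zero, Psi_nil, map_one, one_smul, zero_add]
          | cons x l' =>
              rw [t0_cons, hD1, ← Psi_cons, eps_psi_cons, zero_smul, add_zero]
        have hs : (Finsupp.single l c : W g) = c • Finsupp.single l 1 := by
          rw [Finsupp.smul_single, smul_eq_mul, mul_one]
        rw [hs, map_smul, map_smul, map_smul, map_smul, smul_assoc, ← smul_add, base]
  have h := key (Phi g u)
  rw [psi_phi] at h
  exact h

lemma s1_D2_id
    (hD2 : ∀ u : A g, D2' u = ∑ j : Fin g,
      (aV g j ⊗ₜ[ℚ] (iotaA g (bV g j) * u) - bV g j ⊗ₜ[ℚ] (iotaA g (aV g j) * u)))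
    (u : A g) : s1m g (D2' u) = u := by
  rw [hD2, map_sum]
  have hterm : ∀ j : Fin g,
      s1m g (aV g j ⊗ₜ[ℚ] (iotaA g (bV g j) * u)
        - bV g j ⊗ₜ[ℚ] (iotaA g (aV g j) * u)) = if j = 0 then u else 0 := by
    intro j
    rw [map_sub,
      show aV g j = eb g (Sum.inl j) from rfl,
      show bV g j = eb g (Sum.inr j) from rfl,
      s1m_tmul_basis, s1m_tmul_basis, if_neg (by simp)]
    by_cases hj : j = 0
    · subst hj
      rw [if_pos rfl, phi_iota_mul, Lmap_basis,
        Lop_inl, sgm_cns_inl0, psi_phi, zero_sub, neg_neg]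
      exact (if_pos rfl).symm
    · rw [if_neg (by simpa using hj), if_neg hj, sub_zero]
  rw [Finset.sum_congr rfl fun j _ => hterm j]
  simp only [Finset.sum_ite_eq', Finset.mem_univ, if_true]

lemma h1_basej {j : Fin g} (hj : j ≠ 0) (l : List (X g)) :
    t0 g (Lop g (Sum.inr j) (Finsupp.single l 1))
      = eb g (Sum.inr j) ⊗ₜ[ℚ] Psi g (Finsupp.single l 1) := by
  rw [Lop_inr_single]
  cases l with
  | nil => rw [Lb_nil, t0_cons]
  | cons x l' =>
      cases x with
      | inr i => rw [Lb_cons_inr, t0_cons]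
      | inl i =>
          rw [Lb_cons_inl, if_neg (fun h => hj h.2), t0_cons]

lemma h1_base0
    (hD2 : ∀ u : A g, D2' u = ∑ j : Fin g,
      (aV g j ⊗ₜ[ℚ] (iotaA g (bV g j) * u) - bV g j ⊗ₜ[ℚ] (iotaA g (aV g j) * u)))
    (l : List (X g)) :
    D2' (sgm g (Finsupp.single l 1))
      + t0 g (Lop g (Sum.inr (0 : Fin g)) (Finsupp.single l 1))
      = eb g (Sum.inr (0 : Fin g)) ⊗ₜ[ℚ] Psi g (Finsupp.single l 1) := by
  rw [Lop_inr_single]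
  cases l with
  | nil => rw [sgm_nil, map_zero, zero_add, Lb_nil, t0_cons]
  | cons x l' =>
      cases x with
      | inr i => rw [sgm_cons_inr, map_zero, zero_add, Lb_cons_inr, t0_cons]
      | inl i =>
          by_cases hi : i = 0
          · subst hi
            rw [sgm_cons_inl, if_pos rfl, map_neg, hD2,
              Lb_cons_inl, if_pos ⟨rfl, rfl⟩, map_sub, map_sum, map_sum]
            have hA : ∀ k : Fin g, t0 g (cns g (Sum.inl k) (Lb g l' k))
                = aV g k ⊗ₜ[ℚ] (iotaA g (bV g k) * Psi g (Finsupp.single l' 1)) := by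
              intro k
              rw [t0_cns, psi_Lb]
              rfl
            have hB : ∀ k ∈ Finset.univ.erase (0 : Fin g),
                t0 g (Finsupp.single (Sum.inr k :: Sum.inl k :: l') (1 : ℚ))
                = bV g k ⊗ₜ[ℚ] (iotaA g (aV g k) * Psi g (Finsupp.single l' 1)) := by
              intro k _
              rw [t0_cons, Psi_cons]
              rfl
            rw [Finset.sum_congr rfl (fun k _ => hA k), Finset.sum_congr rfl hB,
              Psi_cons]
            have expand : ∑ k : Fin g,
                bV g k ⊗ₜ[ℚ] (iotaA g (aV g k) * Psi g (Finsupp.single l' 1))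
                = bV g 0 ⊗ₜ[ℚ] (iotaA g (aV g 0) * Psi g (Finsupp.single l' 1))
                  + ∑ k ∈ Finset.univ.erase (0 : Fin g),
                    bV g k ⊗ₜ[ℚ] (iotaA g (aV g k) * Psi g (Finsupp.single l' 1)) :=
              (Finset.add_sum_erase Finset.univ _ (Finset.mem_univ (0 : Fin g))).symm
            rw [Finset.sum_sub_distrib, expand]
            have : eb g (Sum.inr (0 : Fin g)) = bV g 0 := rfl
            rw [this, show iotaA g (eb g (Sum.inl (0 : Fin g))) = iotaA g (aV g 0) from rfl]
            abel
          · rw [sgm_cons_inl, if_neg hi, map_zero, zero_add,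
              Lb_cons_inl, if_neg (fun h => hi h.1), t0_cons]

lemma h1_pos_all
    (hD2 : ∀ u : A g, D2' u = ∑ j : Fin g,
      (aV g j ⊗ₜ[ℚ] (iotaA g (bV g j) * u) - bV g j ⊗ₜ[ℚ] (iotaA g (aV g j) * u)))
    (w : W g) :
    D2' (sgm g w) + t0 g (Lop g (Sum.inr (0 : Fin g)) w)
      = eb g (Sum.inr (0 : Fin g)) ⊗ₜ[ℚ] Psi g w := by
  induction w using Finsupp.induction_linear with
  | zero => simp [TensorProduct.tmul_zero]
  | add f h hf hh =>
      simp only [map_add]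
      rw [add_add_add_comm, hf, hh, TensorProduct.tmul_add]
  | single l c =>
      have hs : (Finsupp.single l c : W g) = c • Finsupp.single l 1 := by
        rw [Finsupp.smul_single, smul_eq_mul, mul_one]
      rw [hs]
      simp only [map_smul, TensorProduct.tmul_smul]
      rw [← smul_add, h1_base0 g D2' hD2 l]

lemma h1_neg_all {j : Fin g} (hj : j ≠ 0) (w : W g) :
    t0 g (Lop g (Sum.inr j) w) = eb g (Sum.inr j) ⊗ₜ[ℚ] Psi g w := by
  induction w using Finsupp.induction_linear with
  | zero => simp [TensorProduct.tmul_zero]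
  | add f h hf hh =>
      simp only [map_add]
      rw [hf, hh, TensorProduct.tmul_add]
  | single l c =>
      have hs : (Finsupp.single l c : W g) = c • Finsupp.single l 1 := by
        rw [Finsupp.smul_single, smul_eq_mul, mul_one]
      rw [hs]
      simp only [map_smul, TensorProduct.tmul_smul]
      rw [h1_basej g hj l]

lemma h1_core
    (hD2 : ∀ u : A g, D2' u = ∑ j : Fin g,
      (aV g j ⊗ₜ[ℚ] (iotaA g (bV g j) * u) - bV g j ⊗ₜ[ℚ] (iotaA g (aV g j) * u)))
    (hD1 : ∀ (x : V g) (v : A g), D1' (x ⊗ₜ[ℚ] v) = iotaA g x * v)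
    (x : X g) {w : W g} (hw : w ∈ Wred g) :
    D2' (s1m g (eb g x ⊗ₜ[ℚ] Psi g w)) + s0m g (D1' (eb g x ⊗ₜ[ℚ] Psi g w))
      = eb g x ⊗ₜ[ℚ] Psi g w := by
  rw [hD1, ← psi_Lop, s1m_tmul_basis, phi_psi g hw]
  have hs0 : s0m g (Psi g (Lop g x w)) = t0 g (Lop g x w) := by
    rw [s0m, LinearMap.comp_apply, phi_psi g (Lop_mem_Wred g x hw)]
  rw [hs0]
  cases x with
  | inl j =>
      rw [if_neg (by simp), map_zero, zero_add, Lop_inl, t0_cns]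
  | inr j =>
      by_cases hj : j = 0
      · subst hj
        rw [if_pos rfl]
        exact h1_pos_all g D2' hD2 w
      · rw [if_neg (by simpa using hj), map_zero, zero_add]
        exact h1_neg_all g hj w

end MainIdentities

section Final

variable (D2' : A g →ₗ[ℚ] V g ⊗[ℚ] A g) (D1' : V g ⊗[ℚ] A g →ₗ[ℚ] A g)

lemma h1_identity
    (hD2 : ∀ u : A g, D2' u = ∑ j : Fin g,
      (aV g j ⊗ₜ[ℚ] (iotaA g (bV g j) * u) - bV g j ⊗ₜ[ℚ] (iotaA g (aV g j) * u)))
    (hD1 : ∀ (x : V g) (v : A g), D1' (x ⊗ₜ[ℚ] v) = iotaA g x * v)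
    (t : V g ⊗[ℚ] A g) :
    D2' (s1m g t) + s0m g (D1' t) = t := by
  induction t using TensorProduct.induction_on with
  | zero => simp
  | add a b ha hb =>
      simp only [map_add]
      rw [add_add_add_comm, ha, hb]
  | tmul v u =>
      have hv : v ⊗ₜ[ℚ] u = ∑ x : X g, v x • (eb g x ⊗ₜ[ℚ] u) := by
        conv_lhs => rw [v_eq_sum g v]
        rw [TensorProduct.sum_tmul]
        refine Finset.sum_congr rfl fun x _ => ?_
        rw [TensorProduct.smul_tmul']
      rw [hv]
      simp only [map_sum, map_smul]
      rw [← Finset.sum_add_distrib]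
      refine Finset.sum_congr rfl fun x _ => ?_
      rw [← smul_add]
      congr 1
      have hu : u = Psi g (Phi g u) := (psi_phi g u).symm
      rw [hu]
      exact h1_core g D2' D1' hD2 hD1 x (phi_mem_Wred g u)

lemma D1_D2_zero
    (hD2 : ∀ u : A g, D2' u = ∑ j : Fin g,
      (aV g j ⊗ₜ[ℚ] (iotaA g (bV g j) * u) - bV g j ⊗ₜ[ℚ] (iotaA g (aV g j) * u)))
    (hD1 : ∀ (x : V g) (v : A g), D1' (x ⊗ₜ[ℚ] v) = iotaA g x * v)
    (u : A g) : D1' (D2' u) = 0 := by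
  rw [hD2, map_sum]
  simp only [map_sub, hD1]
  have key := congrArg (· * u) (theta_zero g)
  simp only [Finset.sum_mul, sub_mul, zero_mul, mul_assoc] at key
  exact key

end Final

end AuxNF

/-- For `g ≥ 1`, the sequence `0 → A →∂₂ V ⊗ A →∂₁ A →ε ℚ → 0` is exact:
`∂₂` is injective, `range ∂₂ = ker ∂₁`, `range ∂₁ = ker ε`, and `ε` is surjective. -/
theorem statement3 (g : ℕ) (hg : 1 ≤ g)
    (D2 : A g →ₗ[ℚ] V g ⊗[ℚ] A g)
    (D1 : V g ⊗[ℚ] A g →ₗ[ℚ] A g)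
    (hD2 : ∀ u : A g, D2 u =
      ∑ j : Fin g,
        (aV g j ⊗ₜ[ℚ] (iotaA g (bV g j) * u) - bV g j ⊗ₜ[ℚ] (iotaA g (aV g j) * u)))
    (hD1 : ∀ (x : V g) (v : A g), D1 (x ⊗ₜ[ℚ] v) = iotaA g x * v) :
    Function.Injective D2 ∧
      LinearMap.range D2 = LinearMap.ker D1 ∧
      LinearMap.range D1 = LinearMap.ker (epsA g).toLinearMap ∧
      Function.Surjective (epsA g) := by
  haveI : NeZero g := ⟨by omega⟩
  refine ⟨?_, ?_, ?_, ?_⟩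
  · exact Function.LeftInverse.injective (g := s1m g) (fun u => s1_D2_id g D2 hD2 u)
  · apply le_antisymm
    · rintro t ⟨u, rfl⟩
      exact LinearMap.mem_ker.mpr (D1_D2_zero g D2 D1 hD2 hD1 u)
    · intro t ht
      have h := h1_identity g D2 D1 hD2 hD1 t
      rw [LinearMap.mem_ker.mp ht, map_zero, add_zero] at h
      exact ⟨s1m g t, h⟩
  · apply le_antisymm
    · rintro u ⟨t, rfl⟩
      rw [LinearMap.mem_ker, AlgHom.toLinearMap_apply]
      induction t using TensorProduct.induction_on with
      | zero => simp
      | add a b ha hb => rw [map_add, map_add, ha, hb, add_zero]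
      | tmul x v => rw [hD1, map_mul, eps_iota, zero_mul]
    · intro u hu
      have h := h0_identity g D1 hD1 u
      rw [show epsA g u = 0 from LinearMap.mem_ker.mp hu, zero_smul, add_zero] at h
      exact ⟨s0m g u, h⟩
  · intro q
    exact ⟨algebraMap ℚ (A g) q, by simpa using (epsA g).commutes q⟩
end
end

section
/- Let r ≥ 0, 0 ≤ j ≤ r, and let f, f₁,…,f_r : ℝ → ℝ be continuous. Then ∫₀¹ f(t) · I(f₁,…,f_j)(0,t) · I(f_{j+1},…,f_r)(t,1) dt = I(f₁,…,f_j, f, f_{j+1},…,f_r)(0,1), where the right-hand side is the time-ordered iterated integral of the list obtained by inserting f between the j-th and (j+1)-st entries. -/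
noncomputable section

open intervalIntegral

/-- Auxiliary recursion (on the reversed list): `itRev [f_k, …, f₁] s t` is the
time-ordered iterated integral `I(f₁,…,f_k)(s,t)`. -/
noncomputable def itRev : List (ℝ → ℝ) → ℝ → ℝ → ℝ
  | [], _, _ => 1
  | f :: fs, s, t => ∫ u in s..t, f u * itRev fs s u

/-- The time-ordered iterated integral `I(f₁,…,f_r)(s,t)`, defined recursively by
`I()(s,t) = 1` and `I(f₁,…,f_k)(s,t) = ∫_s^t f_k(u) · I(f₁,…,f_{k−1})(s,u) du`. -/
noncomputable def timeOrderedIntegral (fs : List (ℝ → ℝ)) (s t : ℝ) : ℝ :=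
  itRev fs.reverse s t

open MeasureTheory Set

/-- Joint continuity of `itRev`. -/
lemma itRev_continuous : ∀ (fs : List (ℝ → ℝ)), (∀ g ∈ fs, Continuous g) →
    Continuous (fun p : ℝ × ℝ => itRev fs p.1 p.2)
  | [], _ => by simpa [itRev] using continuous_const
  | g :: gs, h => by
    have hg : Continuous g := h g (by simp)
    have hgs : Continuous (fun p : ℝ × ℝ => itRev gs p.1 p.2) :=
      itRev_continuous gs (fun f hf => h f (by simp [hf]))
    have hF : Continuous (Function.uncurry fun (p : ℝ × ℝ) (u : ℝ) => g u * itRev gs p.1 u) := by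
      apply Continuous.mul
      · exact hg.comp continuous_snd
      · exact hgs.comp ((continuous_fst.comp continuous_fst).prodMk continuous_snd)
    have h1 : Continuous fun p : ℝ × ℝ => ∫ u in (0:ℝ)..p.2, g u * itRev gs p.1 u :=
      intervalIntegral.continuous_parametric_intervalIntegral_of_continuous hF continuous_snd
    have h2 : Continuous fun p : ℝ × ℝ => ∫ u in (0:ℝ)..p.1, g u * itRev gs p.1 u :=
      intervalIntegral.continuous_parametric_intervalIntegral_of_continuous hF continuous_fst
    have : (fun p : ℝ × ℝ => itRev (g :: gs) p.1 p.2) =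
        fun p : ℝ × ℝ => (∫ u in (0:ℝ)..p.2, g u * itRev gs p.1 u)
          - ∫ u in (0:ℝ)..p.1, g u * itRev gs p.1 u := by
      funext p
      have hi : ∀ a b : ℝ, IntervalIntegrable (fun u => g u * itRev gs p.1 u) volume a b := by
        intro a b
        exact (hg.mul (hgs.comp (continuous_const.prodMk continuous_id))).intervalIntegrable a b
      rw [intervalIntegral.integral_interval_sub_left (hi 0 p.2) (hi 0 p.1)]
      rfl
    rw [this]
    exact h1.sub h2

/-- Fubini for the triangle `{0 ≤ t ≤ u ≤ x}` with a jointly continuous integrand. -/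
lemma fubini_triangle (φ : ℝ → ℝ → ℝ) (hφ : Continuous (Function.uncurry φ))
    {x : ℝ} (hx : (0:ℝ) ≤ x) :
    (∫ t in (0:ℝ)..x, ∫ u in t..x, φ t u) = ∫ u in (0:ℝ)..x, ∫ t in (0:ℝ)..u, φ t u := by
  set μ := volume.restrict (Ioc (0:ℝ) x) with hμ
  set F : ℝ → ℝ → ℝ := fun t u => if t ≤ u then φ t u else 0 with hFdef
  have hFmeas : Measurable (Function.uncurry F) :=
    Measurable.ite (measurableSet_le measurable_fst measurable_snd) hφ.measurable measurable_const
  have hφint : Integrable (Function.uncurry φ) (μ.prod μ) := by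
    rw [hμ, Measure.prod_restrict]
    have hcmp : IsCompact (Icc (0:ℝ) x ×ˢ Icc (0:ℝ) x) := isCompact_Icc.prod isCompact_Icc
    have : IntegrableOn (Function.uncurry φ) (Icc (0:ℝ) x ×ˢ Icc (0:ℝ) x)
        (volume.prod volume) := by
      rw [← Measure.volume_eq_prod]
      exact hφ.continuousOn.integrableOn_compact hcmp
    exact this.mono_set (Set.prod_mono Ioc_subset_Icc_self Ioc_subset_Icc_self)
  have hFint : Integrable (Function.uncurry F) (μ.prod μ) := by
    refine hφint.norm.mono' (hFmeas.aestronglyMeasurable) ?_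
    filter_upwards with p
    by_cases hp : p.1 ≤ p.2 <;> simp [Function.uncurry, hFdef, hp, abs_nonneg]
  have swap := integral_integral_swap hFint
  have hL : (∫ t in (0:ℝ)..x, ∫ u in t..x, φ t u) = ∫ t, (∫ u, F t u ∂μ) ∂μ := by
    rw [intervalIntegral.integral_of_le hx]
    apply setIntegral_congr_fun measurableSet_Ioc
    intro t ht
    have h1 : (fun u => F t u) = Set.indicator (Ici t) (φ t) := by
      funext u
      by_cases h : t ≤ u <;> simp [hFdef, h, Set.indicator_apply]
    show _ = ∫ u in Ioc (0:ℝ) x, F t u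
    rw [h1, setIntegral_indicator measurableSet_Ici]
    have h2 : Ioc (0:ℝ) x ∩ Ici t = Icc t x := by
      ext u
      simp only [mem_inter_iff, mem_Ioc, mem_Ici, mem_Icc]
      constructor
      · rintro ⟨⟨_, hu2⟩, hu3⟩; exact ⟨hu3, hu2⟩
      · rintro ⟨hu1, hu2⟩; exact ⟨⟨lt_of_lt_of_le ht.1 hu1, hu2⟩, hu1⟩
    rw [h2, integral_Icc_eq_integral_Ioc, ← intervalIntegral.integral_of_le ht.2]
  have hR : (∫ u in (0:ℝ)..x, ∫ t in (0:ℝ)..u, φ t u) = ∫ u, (∫ t, F t u ∂μ) ∂μ := by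
    rw [intervalIntegral.integral_of_le hx]
    apply setIntegral_congr_fun measurableSet_Ioc
    intro u hu
    have h1 : (fun t => F t u) = Set.indicator (Iic u) (fun t => φ t u) := by
      funext t
      by_cases h : t ≤ u <;> simp [hFdef, h, Set.indicator_apply]
    show _ = ∫ t in Ioc (0:ℝ) x, F t u
    rw [h1, setIntegral_indicator measurableSet_Iic]
    have h2 : Ioc (0:ℝ) x ∩ Iic u = Ioc 0 u := by
      ext t
      simp only [mem_inter_iff, mem_Ioc, mem_Iic]
      constructor
      · rintro ⟨⟨ht1, _⟩, ht3⟩; exact ⟨ht1, ht3⟩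
      · rintro ⟨ht1, ht2⟩; exact ⟨⟨ht1, le_trans ht2 hu.2⟩, ht2⟩
    rw [h2, ← intervalIntegral.integral_of_le (le_of_lt hu.1)]
  rw [hL, hR, swap]

/-- The generalized insertion identity with a variable upper endpoint. -/
lemma key_insertion (f : ℝ → ℝ) (hf : Continuous f) :
    ∀ (B : List (ℝ → ℝ)), (∀ g ∈ B, Continuous g) →
    ∀ (A : List (ℝ → ℝ)), (∀ g ∈ A, Continuous g) →
    ∀ x : ℝ, 0 ≤ x →
    (∫ t in (0:ℝ)..x, f t * timeOrderedIntegral A 0 t * timeOrderedIntegral B t x) =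
      timeOrderedIntegral (A ++ f :: B) 0 x := by
  intro B
  induction B using List.reverseRecOn with
  | nil =>
    intro _ A hA x _
    simp only [timeOrderedIntegral, List.reverse_nil, itRev, mul_one]
    have : (A ++ [f]).reverse = f :: A.reverse := by simp
    rw [this]
    rfl
  | append_singleton B' b IH =>
    intro hB A hA x hx
    have hB' : ∀ g ∈ B', Continuous g := fun g hg => hB g (by simp [hg])
    have hb : Continuous b := hB b (by simp)
    have hAc : Continuous (fun p : ℝ × ℝ => itRev A.reverse p.1 p.2) :=
      itRev_continuous A.reverse (by simpa using hA)
    have hB'c : Continuous (fun p : ℝ × ℝ => itRev B'.reverse p.1 p.2) :=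
      itRev_continuous B'.reverse (by simpa using hB')
    set φ : ℝ → ℝ → ℝ := fun t u =>
      f t * itRev A.reverse 0 t * (b u * itRev B'.reverse t u) with hφdef
    have hφc : Continuous (Function.uncurry φ) := by
      apply Continuous.mul
      · apply Continuous.mul
        · exact hf.comp continuous_fst
        · exact hAc.comp (continuous_const.prodMk continuous_fst)
      · exact (hb.comp continuous_snd).mul (hB'c.comp (continuous_fst.prodMk continuous_snd))
    -- rewrite LHS as a double integral
    have hLHS : (∫ t in (0:ℝ)..x,
        f t * timeOrderedIntegral A 0 t * timeOrderedIntegral (B' ++ [b]) t x) =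
        ∫ t in (0:ℝ)..x, ∫ u in t..x, φ t u := by
      apply intervalIntegral.integral_congr
      intro t _
      beta_reduce
      have h1 : timeOrderedIntegral (B' ++ [b]) t x
          = ∫ u in t..x, b u * itRev B'.reverse t u := by
        simp only [timeOrderedIntegral, List.reverse_append, List.reverse_singleton,
          List.singleton_append, itRev]
      rw [h1]
      simp only [timeOrderedIntegral, hφdef]
      rw [← intervalIntegral.integral_const_mul]
    -- rewrite RHS as a double integral
    have hRHS : timeOrderedIntegral (A ++ f :: (B' ++ [b])) 0 x =
        ∫ u in (0:ℝ)..x, ∫ t in (0:ℝ)..u, φ t u := by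
      have h1 : A ++ f :: (B' ++ [b]) = (A ++ f :: B') ++ [b] := by simp
      rw [h1]
      have h2 : timeOrderedIntegral ((A ++ f :: B') ++ [b]) 0 x
          = ∫ u in (0:ℝ)..x, b u * timeOrderedIntegral (A ++ f :: B') 0 u := by
        simp only [timeOrderedIntegral, List.reverse_append, List.reverse_singleton,
          List.singleton_append, itRev]
      rw [h2]
      apply intervalIntegral.integral_congr
      intro u hu
      beta_reduce
      have hu0 : (0:ℝ) ≤ u := by
        rcases hu with ⟨h1', _⟩
        simpa [min_eq_left hx, inf_of_le_left hx] using h1'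
      rw [← IH hB' A hA u hu0]
      rw [← intervalIntegral.integral_const_mul]
      apply intervalIntegral.integral_congr
      intro t _
      beta_reduce
      simp only [hφdef, timeOrderedIntegral]
      ring
    rw [hLHS, hRHS, fubini_triangle φ hφc hx]

/-- For continuous `f` and continuous lists `A = (f₁,…,f_j)`,
`B = (f_{j+1},…,f_r)`:
`∫₀¹ f(t) · I(A)(0,t) · I(B)(t,1) dt = I(A ++ f :: B)(0,1)`,
the iterated integral of the list obtained by inserting `f` between `A` and `B`. -/
theorem statement11 (f : ℝ → ℝ) (A B : List (ℝ → ℝ))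
    (hf : Continuous f) (hA : ∀ g ∈ A, Continuous g) (hB : ∀ g ∈ B, Continuous g) :
    (∫ t in (0:ℝ)..1, f t * timeOrderedIntegral A 0 t * timeOrderedIntegral B t 1) =
      timeOrderedIntegral (A ++ f :: B) 0 1 := by
  exact key_insertion f hf B hB A hA 1 zero_le_one
end
end
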